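/- Let $k \geq 1$, $n > k$, $d = \prod_{j=0}^{k}(n-j)^2 - n$, and $0 \leq i \leq k$. Then the fundamental unit $\varepsilon_{D_i}$ of $\mathbb{Q}(\sqrt{d+i})$ satisfies $\varepsilon_{D_i} \leq 4 n^{2k+1}$. -/

import Mathlib

open Polynomial in
theorem sqrtNatIsIntegral (N : ℕ) : IsIntegral ℚ (Real.sqrt N) := by
  refine ⟨X ^ 2 - C (N : ℚ), monic_X_pow_sub_C _ (by norm_num), ?_⟩
  simp [Real.sq_sqrt (by positivity : (0:ℝ) ≤ (N:ℝ))]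

/-- The real quadratic field `ℚ(√N)`, realized as a subfield of `ℝ`. -/
noncomputable def Qsqrt (N : ℕ) : IntermediateField ℚ ℝ :=
  IntermediateField.adjoin ℚ {Real.sqrt N}

instance (N : ℕ) : FiniteDimensional ℚ (Qsqrt N) :=
  IntermediateField.adjoin.finiteDimensional (sqrtNatIsIntegral N)

instance (N : ℕ) : NumberField (Qsqrt N) := ⟨⟩

/-- The fundamental unit of `ℚ(√N)`, i.e. the smallest real number `> 1` that is (the image
under the real embedding of) a unit of the ring of integers of `ℚ(√N)`. -/
noncomputable def fundUnit (N : ℕ) : ℝ :=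
  sInf {x : ℝ | 1 < x ∧ ∃ u : (NumberField.RingOfIntegers (Qsqrt N))ˣ,
    ((algebraMap (NumberField.RingOfIntegers (Qsqrt N)) (Qsqrt N) u : Qsqrt N) : ℝ) = x}

/-- If `a + b√N` with integers `a ≥ 2`, `b ≥ 1` satisfies `a² = b²N + 1`, then
`fundUnit N ≤ a + b√N`. -/
theorem fundUnit_le_of_sol (N : ℕ) (a b : ℤ) (ha : 2 ≤ a) (hb : 1 ≤ b)
    (hab : a^2 = b^2 * (N : ℤ) + 1) :
    fundUnit N ≤ (a : ℝ) + (b : ℝ) * Real.sqrt N := by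
  have hmemS : Real.sqrt N ∈ Qsqrt N := IntermediateField.subset_adjoin ℚ _ rfl
  set K := Qsqrt N with hK
  set s0 : K := ⟨Real.sqrt N, hmemS⟩ with hs0
  have hsq : s0 * s0 = ((N : ℕ) : K) := by
    apply Subtype.ext
    push_cast
    exact Real.mul_self_sqrt (by positivity)
  have hsInt : IsIntegral ℤ s0 := by
    refine ⟨Polynomial.X^2 - Polynomial.C ((N : ℕ) : ℤ),
      Polynomial.monic_X_pow_sub_C _ two_ne_zero, ?_⟩
    simp [sq, hsq]
  have hAInt : IsIntegral ℤ ((a : K)) := by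
    have : IsIntegral ℤ (algebraMap ℤ K a) := isIntegral_algebraMap
    exact this
  have hBInt : IsIntegral ℤ ((b : K)) := by
    have : IsIntegral ℤ (algebraMap ℤ K b) := isIntegral_algebraMap
    exact this
  have hαInt : IsIntegral ℤ ((a : K) + (b : K) * s0) := hAInt.add (hBInt.mul hsInt)
  have hβInt : IsIntegral ℤ ((a : K) - (b : K) * s0) := hAInt.sub (hBInt.mul hsInt)
  have hkeyK : ((a : K))^2 = ((b : K))^2 * ((N : ℕ) : K) + 1 := by
    exact_mod_cast congrArg (fun z : ℤ => (z : K)) hab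
  have hαβ : ((a : K) + (b : K) * s0) * ((a : K) - (b : K) * s0) = 1 := by
    linear_combination hkeyK - (b : K)^2 * hsq
  have hαO : (a : K) + (b : K) * s0 ∈ integralClosure ℤ K := hαInt
  have hβO : (a : K) - (b : K) * s0 ∈ integralClosure ℤ K := hβInt
  set u : (NumberField.RingOfIntegers K)ˣ :=
    ⟨⟨(a : K) + (b : K) * s0, hαO⟩, ⟨(a : K) - (b : K) * s0, hβO⟩,
      NumberField.RingOfIntegers.ext (by exact hαβ),
      NumberField.RingOfIntegers.ext (by show ((a : K) - (b : K) * s0) * ((a : K) + (b : K) * s0) = 1; exact (mul_comm _ _).trans hαβ)⟩ with hu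
  have himg : ((algebraMap (NumberField.RingOfIntegers K) K u : K) : ℝ)
      = (a : ℝ) + (b : ℝ) * Real.sqrt N := by
    have h1 : (algebraMap (NumberField.RingOfIntegers K) K u : K)
        = (a : K) + (b : K) * s0 := NumberField.RingOfIntegers.map_mk _ _
    rw [h1]
    push_cast
    rfl
  have hgt1 : 1 < ((algebraMap (NumberField.RingOfIntegers K) K u : K) : ℝ) := by
    rw [himg]
    have hs0nn : (0:ℝ) ≤ Real.sqrt N := Real.sqrt_nonneg _
    have ha' : (2:ℝ) ≤ (a:ℝ) := by exact_mod_cast ha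
    have hb' : (1:ℝ) ≤ (b:ℝ) := by exact_mod_cast hb
    nlinarith
  calc fundUnit N ≤ ((algebraMap (NumberField.RingOfIntegers K) K u : K) : ℝ) :=
        csInf_le ⟨1, fun y hy => hy.1.le⟩ ⟨hgt1, u, rfl⟩
  _ = (a : ℝ) + (b : ℝ) * Real.sqrt N := himg

/-- Let `k ≥ 1`, `n > k`, `d = ∏_{j=0}^k (n-j)² - n`, and `0 ≤ i ≤ k`. Then the fundamental
unit of `ℚ(√(d+i))` satisfies `ε ≤ 4 n^(2k+1)`. -/
theorem statement4 (k : ℕ) (hk : 1 ≤ k) (n : ℕ) (hn : k < n)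
    (d : ℕ) (hd : (d : ℤ) = (∏ j ∈ Finset.range (k + 1), ((n : ℤ) - j) ^ 2) - n)
    (i : ℕ) (hi : i ≤ k) :
    fundUnit (d + i) ≤ 4 * (n : ℝ) ^ (2 * k + 1) := by
  have hin : i < n := lt_of_le_of_lt hi hn
  obtain ⟨P, hPdef⟩ : ∃ P : ℕ, P = ∏ j ∈ Finset.range (k+1), (n - j) := ⟨_, rfl⟩
  obtain ⟨q, hqdef⟩ : ∃ q : ℕ, q = ∏ j ∈ (Finset.range (k+1)).erase i, (n - j) := ⟨_, rfl⟩
  have hiMem : i ∈ Finset.range (k+1) := Finset.mem_range.mpr (Nat.lt_succ_of_le hi)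
  have hPq : P = (n - i) * q := by
    rw [hPdef, hqdef]; exact (Finset.mul_prod_erase _ _ hiMem).symm
  have hq1 : 1 ≤ q := by
    rw [hqdef]
    exact Finset.one_le_prod' (fun j hj => by
      have h1 : j < n := lt_of_lt_of_le (Finset.mem_range.mp (Finset.mem_of_mem_erase hj)) hn
      show 1 ≤ n - j
      omega)
  have hnP : n ≤ P := by
    rw [hPdef]
    have h0 : 0 ∈ Finset.range (k+1) := Finset.mem_range.mpr (Nat.succ_pos k)
    have := Finset.single_le_prod' (f := fun j => n - j) (fun j hj => by
      have h1 : j < n := lt_of_lt_of_le (Finset.mem_range.mp hj) hn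
      show 1 ≤ n - j
      omega) h0
    simpa using this
  have hPZ : (P : ℤ) = ∏ j ∈ Finset.range (k+1), ((n : ℤ) - j) := by
    rw [hPdef, Nat.cast_prod]
    refine Finset.prod_congr rfl fun j hj => ?_
    have : j < n := lt_of_lt_of_le (Finset.mem_range.mp hj) hn
    omega
  have hdZ : (d : ℤ) = (P:ℤ)^2 - n := by
    rw [hd, Finset.prod_pow, ← hPZ]
  have hmZ : ((n - i : ℕ) : ℤ) = (n:ℤ) - i := by omega
  have hN : ((d + i : ℕ) : ℤ) = (P:ℤ)^2 - ((n - i : ℕ) : ℤ) := by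
    push_cast [hmZ, hdZ]
    ring
  have hPqZ : (P : ℤ) = ((n - i : ℕ) : ℤ) * q := by exact_mod_cast hPq
  have hkey : (2*(q:ℤ)*P - 1)^2 = (2*(q:ℤ))^2 * ((d + i : ℕ) : ℤ) + 1 := by
    rw [hN]
    linear_combination (-4*(q:ℤ)) * hPqZ
  have ha2 : (2:ℤ) ≤ 2*(q:ℤ)*P - 1 := by
    have h2P : 2 ≤ P := le_trans (by omega) hnP
    have hq1' : (1:ℤ) ≤ (q:ℤ) := by exact_mod_cast hq1
    have hP2' : (2:ℤ) ≤ (P:ℤ) := by exact_mod_cast h2P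
    nlinarith
  have hb1 : (1:ℤ) ≤ 2*(q:ℤ) := by
    have : (1:ℤ) ≤ (q:ℤ) := by exact_mod_cast hq1
    linarith
  have hmain := fundUnit_le_of_sol (d + i) (2*(q:ℤ)*P - 1) (2*(q:ℤ)) ha2 hb1 hkey
  refine le_trans hmain ?_
  -- now bound the real number
  have hsqrtP : Real.sqrt (d + i : ℕ) ≤ (P : ℝ) := by
    have hNP : ((d + i : ℕ) : ℝ) ≤ ((P : ℝ))^2 := by
      have h1 : ((d + i : ℕ) : ℤ) ≤ (P:ℤ)^2 := by rw [hN]; omega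
      exact_mod_cast h1
    calc Real.sqrt (d + i : ℕ) ≤ Real.sqrt ((P:ℝ)^2) := Real.sqrt_le_sqrt hNP
    _ = (P : ℝ) := Real.sqrt_sq (by positivity)
  have hqnk : q ≤ n ^ k := by
    rw [hqdef]
    have := Finset.prod_le_pow_card ((Finset.range (k+1)).erase i) (fun j => n - j) n
      (fun j hj => Nat.sub_le n j)
    rwa [Finset.card_erase_of_mem hiMem, Finset.card_range, Nat.add_sub_cancel] at this
  have hPnk : P ≤ n ^ (k+1) := by
    rw [hPdef]
    have := Finset.prod_le_pow_card (Finset.range (k+1)) (fun j => n - j) n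
      (fun j hj => Nat.sub_le n j)
    rwa [Finset.card_range] at this
  have hqP : q * P ≤ n ^ (2*k+1) := by
    calc q * P ≤ n^k * n^(k+1) := Nat.mul_le_mul hqnk hPnk
    _ = n ^ (2*k+1) := by ring
  have hqP' : ((q:ℝ)) * P ≤ (n:ℝ) ^ (2*k+1) := by exact_mod_cast hqP
  have hq0 : (0:ℝ) ≤ (q:ℝ) := by positivity
  have hs0nn : (0:ℝ) ≤ Real.sqrt (d + i : ℕ) := Real.sqrt_nonneg _
  push_cast at hmain ⊢
  have h1 : 2*(q:ℝ)*Real.sqrt (d + i : ℕ) ≤ 2*(q:ℝ)*(P:ℝ) := by nlinarith [hsqrtP, hq0]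
  push_cast at h1 hsqrtP
  nlinarith [hqP', hq0, hs0nn, h1]
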